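/- Let M be a matroid, ψ: E(M) → Γ a labeling to an abelian group, and F ⊆ Γ a 2-element set. If M has at least one basis whose label is not in F, then for any basis B there exists a basis B* with ψ(B*) ∉ F and |B \ B*| ≤ 2. -/

import Mathlib

open Set


section Aux

private lemma alg_core {Γ : Type*} [AddCommGroup Γ] {p q u v w : Γ} (hpq : p ≠ q)
    (hu : p + u = p ∨ p + u = q)
    (hv : p + v = p ∨ p + v = q)
    (huv : p + u + v = p ∨ p + u + v = q)
    (huw : p + u + w = p ∨ p + u + w = q)
    (hvw : p + v + w = p ∨ p + v + w = q) :
    p + u + v + w = p ∨ p + u + v + w = q := by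
  rcases hu with hu | hu
  · have hu0 : u = 0 := by rwa [add_eq_left] at hu
    simpa [hu0] using hvw
  · rcases hv with hv | hv
    · have hv0 : v = 0 := by rwa [add_eq_left] at hv
      simpa [hv0] using huw
    · have huv' : p + u + v = p := by
        rcases huv with h | h
        · exact h
        · exfalso
          have hv0 : v = 0 := by
            have h' : p + u + v = p + u := h.trans hu.symm
            rwa [add_eq_left] at h'
          rw [hv0, add_zero] at hv
          exact hpq hv
      have h2 : q + q = p + p := by
        calc q + q = (p + u) + (p + v) := by rw [hu, hv]
          _ = (p + u + v) + p := by abel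
          _ = p + p := by rw [huv']
      rw [show p + u + v + w = (p + u + v) + w from rfl, huv']
      rcases huw with h | h
      · rw [show p + u + w = (p + u) + w from rfl, hu] at h
        right
        calc p + w = (q + q) + w - p := by rw [h2]; abel
          _ = q + (q + w) - p := by abel
          _ = q + p - p := by rw [h]
          _ = q := by abel
      · rw [show p + u + w = (p + u) + w from rfl, hu] at h
        have hw0 : w = 0 := by rwa [add_eq_left] at h
        left; rw [hw0, add_zero]

private lemma alg_lemma {Γ : Type*} [AddCommGroup Γ] {a b p u v w : Γ} (hab : a ≠ b)
    (hu : p + u = a ∨ p + u = b)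
    (hv : p + v = a ∨ p + v = b)
    (huv : p + u + v = a ∨ p + u + v = b)
    (huw : p + u + w = a ∨ p + u + w = b)
    (hvw : p + v + w = a ∨ p + v + w = b)
    (hp : p = a ∨ p = b) :
    p + u + v + w = a ∨ p + u + v + w = b := by
  rcases hp with rfl | rfl
  · exact alg_core hab hu hv huv huw hvw
  · exact (alg_core hab.symm hu.symm hv.symm huv.symm huw.symm hvw.symm).symm

/-- Fin 3 helpers -/
private lemma fin3_third : ∀ x y : Fin 3, x ≠ y →
    ∃ z, z ≠ x ∧ z ≠ y ∧ ∀ w : Fin 3, w = x ∨ w = y ∨ w = z := by decide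

private lemma fin3_two_ne : ∀ a : Fin 3, ∃ u v : Fin 3, u ≠ a ∧ v ≠ a ∧ u ≠ v := by decide

private lemma fin3_ne : ∀ a : Fin 3, ∃ u : Fin 3, u ≠ a := by decide

private lemma mk_sigma (i1 i2 i3 j1 j2 j3 : Fin 3)
    (hcov : ∀ w : Fin 3, w = i1 ∨ w = i2 ∨ w = i3)
    (h12 : i1 ≠ i2) (h13 : i1 ≠ i3) (h23 : i2 ≠ i3)
    (g12 : j1 ≠ j2) (g13 : j1 ≠ j3) (g23 : j2 ≠ j3) :
    ∃ σ : Fin 3 → Fin 3, Function.Injective σ ∧ σ i1 = j1 ∧ σ i2 = j2 ∧ σ i3 = j3 := by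
  classical
  refine ⟨fun i => if i = i1 then j1 else if i = i2 then j2 else j3, ?_, ?_, ?_, ?_⟩
  · intro p q hpq
    rcases hcov p with rfl | rfl | rfl <;> rcases hcov q with rfl | rfl | rfl <;>
      simp [h12, h13, h23, h12.symm, h13.symm, h23.symm] at hpq ⊢ <;>
      first
        | rfl
        | exact absurd hpq g12 | exact absurd hpq g13 | exact absurd hpq g23
        | exact absurd hpq.symm g12 | exact absurd hpq.symm g13 | exact absurd hpq.symm g23
  · simp
  · simp [h12.symm, h12]
  · simp [h13.symm, h23.symm, h13, h23]

end Aux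

/-- The key combinatorial lemma on two `Fin 3`-indexed relations. -/
private lemma matrix_lemma (D S : Fin 3 → Fin 3 → Prop)
    (h2 : ∀ i, ∃ j, D i j ∧ S i j) (h3 : ∀ j, ∃ i, D i j ∧ S i j)
    (hH : ∀ i i' j, i ≠ i' → (∀ k, k ≠ j → ¬ D i k) → (∀ k, k ≠ j → ¬ D i' k) → False) :
    ∃ σ : Fin 3 → Fin 3, Function.Injective σ ∧ (∀ i, D i (σ i)) ∧
      ∃ i i', i ≠ i' ∧ S i (σ i) ∧ S i' (σ i') := by
  classical
  -- Step 1: two disjoint "symmetric" edges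
  have tds : ∃ i1 j1 i2 j2 : Fin 3, i1 ≠ i2 ∧ j1 ≠ j2 ∧
      (D i1 j1 ∧ S i1 j1) ∧ (D i2 j2 ∧ S i2 j2) := by
    obtain ⟨a, hTa⟩ := h2 0
    obtain ⟨b, hTb⟩ := h2 1
    obtain ⟨c, hTc⟩ := h2 2
    by_cases hab : a = b
    · by_cases hac : a = c
      · -- all equal; use h3 on a column ≠ a
        subst hab; subst hac
        have hall : ∀ i : Fin 3, D i a ∧ S i a := by
          intro i
          fin_cases i
          · exact hTa
          · exact hTb
          · exact hTc
        obtain ⟨u, hu⟩ := fin3_ne a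
        obtain ⟨r, hTr⟩ := h3 u
        obtain ⟨i, hir⟩ := fin3_ne r
        exact ⟨i, a, r, u, hir, fun h => hu h.symm, hall i, hTr⟩
      · exact ⟨0, a, 2, c, by decide, hac, hTa, hTc⟩
    · exact ⟨0, a, 1, b, by decide, hab, hTa, hTb⟩
  obtain ⟨i1, j1, i2, j2, hi12, hj12, hT1, hT2⟩ := tds
  obtain ⟨i3, hi31, hi32, icov⟩ := fin3_third i1 i2 hi12
  obtain ⟨j3, hj31, hj32, jcov⟩ := fin3_third j1 j2 hj12
  by_cases hd33 : D i3 j3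
  · obtain ⟨σ, hinj, hs1, hs2, hs3⟩ := mk_sigma i1 i2 i3 j1 j2 j3 icov hi12 hi31.symm hi32.symm
      hj12 hj31.symm hj32.symm
    refine ⟨σ, hinj, ?_, i1, i2, hi12, by rw [hs1]; exact hT1.2, by rw [hs2]; exact hT2.2⟩
    intro i
    rcases icov i with rfl | rfl | rfl
    · rw [hs1]; exact hT1.1
    · rw [hs2]; exact hT2.1
    · rw [hs3]; exact hd33
  · -- row i3 has a sym edge at j1 or j2
    obtain ⟨jc, hTjc⟩ := h2 i3
    have hjc : jc = j1 ∨ jc = j2 := by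
      rcases jcov jc with h | h | h
      · exact Or.inl h
      · exact Or.inr h
      · exact absurd (h ▸ hTjc.1) hd33
    obtain ⟨ir, hTir⟩ := h3 j3
    have hir : ir = i1 ∨ ir = i2 := by
      rcases icov ir with h | h | h
      · exact Or.inl h
      · exact Or.inr h
      · exact absurd (h ▸ hTir.1) hd33
    rcases hjc with hjc | hjc <;> rcases hir with hir2 | hir2
    · -- sym (i3, j1) and (i1, j3) : perm i1↦j3, i2↦j2, i3↦j1, all sym
      have hTjc : D i3 j1 ∧ S i3 j1 := hjc ▸ hTjc
      have hTir : D i1 j3 ∧ S i1 j3 := hir2 ▸ hTir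
      obtain ⟨σ, hinj, hs1, hs2, hs3⟩ := mk_sigma i1 i2 i3 j3 j2 j1 icov hi12 hi31.symm hi32.symm
        hj32 hj31 hj12.symm
      refine ⟨σ, hinj, ?_, i1, i2, hi12, by rw [hs1]; exact hTir.2, by rw [hs2]; exact hT2.2⟩
      intro i
      rcases icov i with rfl | rfl | rfl
      · rw [hs1]; exact hTir.1
      · rw [hs2]; exact hT2.1
      · rw [hs3]; exact hTjc.1
    · -- sym (i3, j1) and (i2, j3)
      have hTjc : D i3 j1 ∧ S i3 j1 := hjc ▸ hTjc
      have hTir : D i2 j3 ∧ S i2 j3 := hir2 ▸ hTir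
      by_cases hA : D i1 j2
      · -- perm i1↦j2, i2↦j3, i3↦j1 ; singles at i2, i3
        obtain ⟨σ, hinj, hs1, hs2, hs3⟩ := mk_sigma i1 i2 i3 j2 j3 j1 icov hi12 hi31.symm hi32.symm
          hj32.symm hj12.symm hj31
        refine ⟨σ, hinj, ?_, i2, i3, hi32.symm, by rw [hs2]; exact hTir.2, by rw [hs3]; exact hTjc.2⟩
        intro i
        rcases icov i with rfl | rfl | rfl
        · rw [hs1]; exact hA
        · rw [hs2]; exact hTir.1
        · rw [hs3]; exact hTjc.1
      by_cases hB : D i3 j2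
      · -- perm i1↦j1, i2↦j3, i3↦j2 ; singles at i1, i2
        obtain ⟨σ, hinj, hs1, hs2, hs3⟩ := mk_sigma i1 i2 i3 j1 j3 j2 icov hi12 hi31.symm hi32.symm
          hj31.symm hj12 hj32
        refine ⟨σ, hinj, ?_, i1, i2, hi12, by rw [hs1]; exact hT1.2, by rw [hs2]; exact hTir.2⟩
        intro i
        rcases icov i with rfl | rfl | rfl
        · rw [hs1]; exact hT1.1
        · rw [hs2]; exact hTir.1
        · rw [hs3]; exact hB
      by_cases hC : D i1 j3
      · -- perm i1↦j3, i2↦j2, i3↦j1 ; singles at i2, i3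
        obtain ⟨σ, hinj, hs1, hs2, hs3⟩ := mk_sigma i1 i2 i3 j3 j2 j1 icov hi12 hi31.symm hi32.symm
          hj32 hj31 hj12.symm
        refine ⟨σ, hinj, ?_, i2, i3, hi32.symm, by rw [hs2]; exact hT2.2, by rw [hs3]; exact hTjc.2⟩
        intro i
        rcases icov i with rfl | rfl | rfl
        · rw [hs1]; exact hC
        · rw [hs2]; exact hT2.1
        · rw [hs3]; exact hTjc.1
      · exfalso
        refine hH i1 i3 j1 hi31.symm ?_ ?_
        · intro k hk
          rcases jcov k with rfl | rfl | rfl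
          · exact absurd rfl hk
          · exact hA
          · exact hC
        · intro k hk
          rcases jcov k with rfl | rfl | rfl
          · exact absurd rfl hk
          · exact hB
          · exact hd33
    · -- sym (i3, j2) and (i1, j3)  (mirror case)
      have hTjc : D i3 j2 ∧ S i3 j2 := hjc ▸ hTjc
      have hTir : D i1 j3 ∧ S i1 j3 := hir2 ▸ hTir
      by_cases hA : D i2 j1
      · -- perm i1↦j3, i2↦j1, i3↦j2 ; singles at i1, i3
        obtain ⟨σ, hinj, hs1, hs2, hs3⟩ := mk_sigma i1 i2 i3 j3 j1 j2 icov hi12 hi31.symm hi32.symm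
          hj31 hj32 hj12
        refine ⟨σ, hinj, ?_, i1, i3, hi31.symm, by rw [hs1]; exact hTir.2, by rw [hs3]; exact hTjc.2⟩
        intro i
        rcases icov i with rfl | rfl | rfl
        · rw [hs1]; exact hTir.1
        · rw [hs2]; exact hA
        · rw [hs3]; exact hTjc.1
      by_cases hB : D i3 j1
      · -- perm i1↦j3, i2↦j2, i3↦j1 ; singles at i1, i2
        obtain ⟨σ, hinj, hs1, hs2, hs3⟩ := mk_sigma i1 i2 i3 j3 j2 j1 icov hi12 hi31.symm hi32.symm
          hj32 hj31 hj12.symm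
        refine ⟨σ, hinj, ?_, i1, i2, hi12, by rw [hs1]; exact hTir.2, by rw [hs2]; exact hT2.2⟩
        intro i
        rcases icov i with rfl | rfl | rfl
        · rw [hs1]; exact hTir.1
        · rw [hs2]; exact hT2.1
        · rw [hs3]; exact hB
      by_cases hC : D i2 j3
      · -- perm i1↦j1, i2↦j3, i3↦j2 ; singles at i1, i3
        obtain ⟨σ, hinj, hs1, hs2, hs3⟩ := mk_sigma i1 i2 i3 j1 j3 j2 icov hi12 hi31.symm hi32.symm
          hj31.symm hj12 hj32
        refine ⟨σ, hinj, ?_, i1, i3, hi31.symm, by rw [hs1]; exact hT1.2, by rw [hs3]; exact hTjc.2⟩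
        intro i
        rcases icov i with rfl | rfl | rfl
        · rw [hs1]; exact hT1.1
        · rw [hs2]; exact hC
        · rw [hs3]; exact hTjc.1
      · exfalso
        refine hH i2 i3 j2 hi32.symm ?_ ?_
        · intro k hk
          rcases jcov k with rfl | rfl | rfl
          · exact hA
          · exact absurd rfl hk
          · exact hC
        · intro k hk
          rcases jcov k with rfl | rfl | rfl
          · exact hB
          · exact absurd rfl hk
          · exact hd33
    · -- sym (i3, j2) and (i2, j3) : perm i1↦j1, i2↦j3, i3↦j2, all sym
      have hTjc : D i3 j2 ∧ S i3 j2 := hjc ▸ hTjc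
      have hTir : D i2 j3 ∧ S i2 j3 := hir2 ▸ hTir
      obtain ⟨σ, hinj, hs1, hs2, hs3⟩ := mk_sigma i1 i2 i3 j1 j3 j2 icov hi12 hi31.symm hi32.symm
        hj31.symm hj12 hj32
      refine ⟨σ, hinj, ?_, i1, i2, hi12, by rw [hs1]; exact hT1.2, by rw [hs2]; exact hTir.2⟩
      intro i
      rcases icov i with rfl | rfl | rfl
      · rw [hs1]; exact hT1.1
      · rw [hs2]; exact hTir.1
      · rw [hs3]; exact hTjc.1



namespace StmtAux

variable {α : Type*} {M : Matroid α}

private lemma base_exch_iff {C : Set α} (hC : M.IsBase C) {x y : α} (hy : y ∈ C)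
    (hxE : x ∈ M.E) (hxC : x ∉ C) :
    M.IsBase (insert x (C \ {y})) ↔ x ∉ M.closure (C \ {y}) := by
  have hCd : M.Indep (C \ {y}) := hC.indep.subset diff_subset
  have hxCd : x ∉ C \ {y} := fun h => hxC h.1
  constructor
  · intro h
    have h2 := h.indep
    rw [hCd.insert_indep_iff_of_notMem hxCd] at h2
    exact h2.2
  · intro h
    refine hC.exchange_isBase_of_indep hxC ?_
    rw [hCd.insert_indep_iff_of_notMem hxCd]
    exact ⟨hxE, h⟩

private lemma exists_min_dep (M : Matroid α) : ∀ (n : ℕ) (S : Set α), S.Finite → S.ncard ≤ n →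
    ¬ M.Indep S → ∃ K, K ⊆ S ∧ ¬ M.Indep K ∧ ∀ K', K' ⊂ K → M.Indep K' := by
  intro n
  induction n with
  | zero =>
    intro S hfin hcard hdep
    exfalso
    have hS : S = ∅ := (Set.ncard_eq_zero hfin).mp (Nat.le_zero.mp hcard)
    rw [hS] at hdep
    exact hdep M.empty_indep
  | succ n ih =>
    intro S hfin hcard hdep
    by_cases h : ∀ K', K' ⊂ S → M.Indep K'
    · exact ⟨S, subset_rfl, hdep, h⟩
    · push_neg at h
      obtain ⟨K', hK'S, hK'dep⟩ := h
      have hK'fin : K'.Finite := hfin.subset hK'S.subset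
      have hK'card : K'.ncard ≤ n := by
        have := Set.ncard_lt_ncard hK'S hfin
        omega
      obtain ⟨K, h1, h2, h3⟩ := ih K' hK'fin hK'card hK'dep
      exact ⟨K, h1.trans hK'S.subset, h2, h3⟩

private lemma min_dep_closure {K : Set α} (hKE : K ⊆ M.E) (hdep : ¬ M.Indep K)
    (hmin : ∀ K', K' ⊂ K → M.Indep K') {z : α} (hz : z ∈ K) :
    z ∈ M.closure (K \ {z}) := by
  have hKz : M.Indep (K \ {z}) := hmin _ ⟨diff_subset, fun hsub => (hsub hz).2 rfl⟩
  have hdep2 : M.Dep (insert z (K \ {z})) := by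
    rw [Set.insert_diff_singleton, Set.insert_eq_of_mem hz]
    exact (M.dep_iff).mpr ⟨hdep, hKE⟩
  rw [hKz.insert_dep_iff] at hdep2
  exact hdep2.1

private lemma sym_exchange [M.Finite] {C D : Set α} (hC : M.IsBase C) (hD : M.IsBase D) {x : α}
    (hx : x ∈ D \ C) :
    ∃ y ∈ C \ D, M.IsBase (insert x (C \ {y})) ∧ M.IsBase (insert y (D \ {x})) := by
  have hxE : x ∈ M.E := hD.subset_ground hx.1
  have hdep : ¬ M.Indep (insert x C) := fun h => hx.2 (hC.mem_of_insert_indep h)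
  have hfin : (insert x C).Finite := M.set_finite _ (insert_subset hxE hC.subset_ground)
  obtain ⟨K, hKsub, hKdep, hKmin⟩ :=
    exists_min_dep M (insert x C).ncard _ hfin le_rfl hdep
  have hKE : K ⊆ M.E := hKsub.trans (insert_subset hxE hC.subset_ground)
  have hxK : x ∈ K := by
    by_contra hxK
    refine hKdep (hC.indep.subset fun z hz => ?_)
    rcases hKsub hz with rfl | hzC
    · exact absurd hz hxK
    · exact hzC
  have hKC : K \ {x} ⊆ C := by
    intro z hz
    rcases hKsub hz.1 with rfl | hzC
    · exact absurd rfl hz.2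
    · exact hzC
  have hxcl : x ∈ M.closure (K \ {x}) := min_dep_closure hKE hKdep hKmin hxK
  by_cases hall : K \ {x} ⊆ M.closure (D \ {x})
  · exfalso
    have h1 : M.closure (K \ {x}) ⊆ M.closure (D \ {x}) :=
      Matroid.closure_subset_closure_of_subset_closure hall
    exact (hD.indep.notMem_closure_diff_of_mem hx.1) (h1 hxcl)
  · obtain ⟨y, hyK, hycl⟩ := not_subset.mp hall
    have hyC : y ∈ C := hKC hyK
    have hyne : y ∉ ({x} : Set α) := hyK.2
    have hyD : y ∉ D := by
      intro hyD
      exact hycl (M.subset_closure (D \ {x}) (diff_subset.trans hD.subset_ground) ⟨hyD, hyne⟩)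
    have hbase2 : M.IsBase (insert y (D \ {x})) := by
      rw [base_exch_iff hD hx.1 (hC.subset_ground hyC) hyD]
      exact hycl
    have hbase1 : M.IsBase (insert x (C \ {y})) := by
      rw [base_exch_iff hC hyC hxE hx.2]
      intro hmem
      have hycl2 : y ∈ M.closure (K \ {y}) := min_dep_closure hKE hKdep hKmin hyK.1
      have hsub : K \ {y} ⊆ M.closure (C \ {y}) := by
        intro z hz
        rcases hKsub hz.1 with rfl | hzC
        · exact hmem
        · exact M.subset_closure (C \ {y}) (diff_subset.trans hC.subset_ground) ⟨hzC, hz.2⟩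
      have hmono : M.closure (K \ {y}) ⊆ M.closure (C \ {y}) :=
        Matroid.closure_subset_closure_of_subset_closure hsub
      exact (hC.indep.notMem_closure_diff_of_mem hyC) (hmono hycl2)
    exact ⟨y, ⟨hyC, hyD⟩, hbase1, hbase2⟩

private lemma closure_eq_of_indep_subset_closure [M.Finite] {I J : Set α} (hI : M.Indep I)
    (hJ : M.Indep J) (hIJ : I ⊆ M.closure J) (hcard : J.encard ≤ I.encard) :
    M.closure I = M.closure J := by
  obtain ⟨I', hI'b, hII'⟩ := hI.subset_isBasis_of_subset hIJ (M.closure_subset_ground J)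
  have hJb : M.IsBasis J (M.closure J) := hJ.isBasis_closure
  have hle : I'.encard ≤ I.encard := (hI'b.encard_eq_encard hJb).le.trans hcard
  have hI'fin : I'.Finite := M.set_finite I' hI'b.indep.subset_ground
  have hII : I = I' := (hI'fin.subset hII').eq_of_subset_of_encard_le hII' hle
  rw [hII, hI'b.closure_eq_closure, Matroid.closure_closure]

private lemma step_exchange [M.Finite] {B C : Set α} (hC : M.IsBase C) (hB : M.IsBase B) {e : α}
    (he : e ∈ B \ C) :
    ∃ g ∈ C \ B, M.IsBase (insert e (C \ {g})) := by
  have heE : e ∈ M.E := hB.subset_ground he.1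
  have hind : M.Indep (insert e (C ∩ B)) :=
    hB.indep.subset (insert_subset he.1 inter_subset_right)
  have hEsub : insert e C ⊆ M.E := insert_subset heE hC.subset_ground
  have hspan : M.Spanning (insert e C) := hC.spanning.superset (subset_insert _ _) hEsub
  obtain ⟨I, hIb, hsubI⟩ := hind.subset_isBasis_of_subset
    (insert_subset_insert inter_subset_left) hEsub
  have hIbase : M.IsBase I := by
    refine hIb.indep.isBase_of_spanning ?_
    rw [Matroid.spanning_iff_closure_eq hIb.indep.subset_ground, hIb.closure_eq_closure]
    exact hspan.closure_eq_of_superset subset_rfl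
  have heI : e ∈ I := hsubI (mem_insert _ _)
  have hIC : I \ C = {e} := by
    apply subset_antisymm
    · intro z hz
      rcases hIb.subset hz.1 with rfl | hzC
      · exact rfl
      · exact absurd hzC hz.2
    · intro z hz
      rcases hz with rfl
      exact ⟨heI, he.2⟩
  have hCI : (C \ I).encard = 1 := by
    rw [hC.encard_diff_comm hIbase, hIC, Set.encard_singleton]
  obtain ⟨g, hg⟩ := Set.encard_eq_one.mp hCI
  have hgCI : g ∈ C \ I := by rw [hg]; exact rfl
  have hgB : g ∉ B := by
    intro hgB
    exact hgCI.2 (hsubI (mem_insert_of_mem _ ⟨hgCI.1, hgB⟩))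
  have hIeq : I = insert e (C \ {g}) := by
    ext z
    constructor
    · intro hz
      rcases hIb.subset hz with rfl | hzC
      · exact mem_insert _ _
      · refine mem_insert_of_mem _ ⟨hzC, ?_⟩
        intro hzg
        rcases hzg with rfl
        exact hgCI.2 hz
    · intro hz
      rcases hz with rfl | hz
      · exact heI
      · by_contra hzI
        have : z ∈ C \ I := ⟨hz.1, hzI⟩
        rw [hg] at this
        exact hz.2 this
  refine ⟨g, ⟨hgCI.1, hgB⟩, ?_⟩
  rw [← hIeq]
  exact hIbase

end StmtAux



namespace StmtAux2

variable {α : Type*} {Γ : Type*} [AddCommGroup Γ]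

private lemma sum_insert_diff (ψ : α → Γ) {C : Set α} (hfin : C.Finite)
    {x y : α} (hy : y ∈ C) (hx : x ∉ C) :
    ∑ᶠ e ∈ insert x (C \ {y}), ψ e = (∑ᶠ e ∈ C, ψ e) + ψ x - ψ y := by
  have h1 : ∑ᶠ e ∈ insert x (C \ {y}), ψ e = ψ x + ∑ᶠ e ∈ C \ {y}, ψ e :=
    finsum_mem_insert ψ (fun h => hx h.1) (hfin.subset diff_subset)
  have h2 : ∑ᶠ e ∈ insert y (C \ {y}), ψ e = ψ y + ∑ᶠ e ∈ C \ {y}, ψ e :=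
    finsum_mem_insert ψ (fun h => h.2 rfl) (hfin.subset diff_subset)
  rw [Set.insert_diff_singleton, Set.insert_eq_of_mem hy] at h2
  rw [h1, h2]
  abel

private lemma sum_diff_exchange (ψ : α → Γ) {C D : Set α} (hC : C.Finite) (hD : D.Finite) :
    (∑ᶠ e ∈ D, ψ e) + ∑ᶠ e ∈ C \ D, ψ e = (∑ᶠ e ∈ C, ψ e) + ∑ᶠ e ∈ D \ C, ψ e := by
  have h1 : ∑ᶠ e ∈ D ∪ (C \ D), ψ e = (∑ᶠ e ∈ D, ψ e) + ∑ᶠ e ∈ C \ D, ψ e :=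
    finsum_mem_union disjoint_sdiff_right hD (hC.subset diff_subset)
  have h2 : ∑ᶠ e ∈ C ∪ (D \ C), ψ e = (∑ᶠ e ∈ C, ψ e) + ∑ᶠ e ∈ D \ C, ψ e :=
    finsum_mem_union disjoint_sdiff_right hC (hD.subset diff_subset)
  rw [← h1, ← h2, Set.union_diff_self, Set.union_diff_self, Set.union_comm]

private lemma sum_triple (ψ : α → Γ) {a b c : α} (hab : a ≠ b) (hac : a ≠ c) (hbc : b ≠ c) :
    ∑ᶠ e ∈ ({a, b, c} : Set α), ψ e = ψ a + ψ b + ψ c := by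
  have h1 : ∑ᶠ e ∈ (insert a (insert b ({c} : Set α))), ψ e
      = ψ a + ∑ᶠ e ∈ (insert b ({c} : Set α)), ψ e := by
    refine finsum_mem_insert ψ ?_ ((Set.finite_singleton c).insert b)
    simp only [mem_insert_iff, mem_singleton_iff]
    tauto
  have h2 : ∑ᶠ e ∈ (insert b ({c} : Set α)), ψ e = ψ b + ∑ᶠ e ∈ ({c} : Set α), ψ e := by
    refine finsum_mem_insert ψ ?_ (Set.finite_singleton c)
    simp only [mem_singleton_iff]
    exact hbc
  show ∑ᶠ e ∈ (insert a (insert b ({c} : Set α))), ψ e = ψ a + ψ b + ψ c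
  rw [h1, h2, finsum_mem_singleton, add_assoc]

private lemma set_step1 {B C' : Set α} {e g : α} (he : e ∈ B) (hg : g ∉ B) :
    B \ (insert e (C' \ {g})) = (B \ C') \ {e} := by
  ext z
  constructor
  · rintro ⟨hzB, hz2⟩
    have hzC : z ∉ C' := by
      intro hzC
      exact hz2 (Or.inr ⟨hzC, fun h => hg (h ▸ hzB)⟩)
    have hze : z ∉ ({e} : Set α) := fun h => hz2 (Or.inl h)
    exact ⟨⟨hzB, hzC⟩, hze⟩
  · rintro ⟨⟨hzB, hzC⟩, hze⟩
    refine ⟨hzB, ?_⟩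
    rintro (h | h)
    · exact hze h
    · exact hzC h.1

private lemma set_step2 {B C' : Set α} {e g : α} (he : e ∈ B) :
    (insert e (C' \ {g})) \ B = (C' \ B) \ {g} := by
  ext z
  constructor
  · rintro ⟨hz1, hzB⟩
    rcases hz1 with h | h
    · exact absurd (h ▸ he) hzB
    · exact ⟨⟨h.1, hzB⟩, h.2⟩
  · rintro ⟨⟨hzC, hzB⟩, hzg⟩
    exact ⟨Or.inr ⟨hzC, hzg⟩, hzB⟩

private lemma set_stepC {C C' : Set α} {e g : α} (he : e ∉ C) (hg : g ∈ C) :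
    C \ (insert e (C' \ {g})) = insert g (C \ C') := by
  ext z
  constructor
  · rintro ⟨hzC, hz2⟩
    by_cases hzg : z = g
    · exact Or.inl hzg
    · refine Or.inr ⟨hzC, fun hzC' => hz2 (Or.inr ⟨hzC', ?_⟩)⟩
      simpa using hzg
  · rintro (rfl | ⟨hzC, hzC'⟩)
    · refine ⟨hg, ?_⟩
      rintro (h | h)
      · exact he (h ▸ hg)
      · exact h.2 rfl
    · refine ⟨hzC, ?_⟩
      rintro (h | h)
      · exact he (h ▸ hzC)
      · exact hzC' h.1

private lemma set_stepX {C C' : Set α} {e g : α} (he : e ∉ C) (hg : g ∈ C) :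
    (insert e (C' \ {g})) \ C = insert e (C' \ C) := by
  ext z
  constructor
  · rintro ⟨hz1, hzC⟩
    rcases hz1 with h | h
    · exact Or.inl h
    · exact Or.inr ⟨h.1, hzC⟩
  · rintro (rfl | ⟨hzC', hzC⟩)
    · exact ⟨Or.inl rfl, he⟩
    · refine ⟨Or.inr ⟨hzC', ?_⟩, hzC⟩
      intro h
      exact hzC (h ▸ hg)

end StmtAux2



private lemma fin3_pair : ∀ j : Fin 3, ∃ k1 k2 : Fin 3, k1 ≠ k2 ∧ k1 ≠ j ∧ k2 ≠ j := by decide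

/-- For a 2-element forbidden set `F`, if an `F`-avoiding basis exists then
for any basis `B` there is an `F`-avoiding basis `B*` with `|B \ B*| ≤ 2`. -/
theorem stmt_6 {α Γ : Type*} [AddCommGroup Γ] (M : Matroid α) [M.Finite]
    (ψ : α → Γ) (F : Finset Γ) (hF : F.card = 2)
    (hex : ∃ B', M.IsBase B' ∧ (∑ᶠ e ∈ B', ψ e) ∉ F)
    (B : Set α) (hB : M.IsBase B) :
    ∃ Bstar, M.IsBase Bstar ∧ (∑ᶠ e ∈ Bstar, ψ e) ∉ F ∧
      (B \ Bstar).ncard ≤ 2 := by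
  classical
  obtain ⟨a, b, hab, hFab⟩ := Finset.card_eq_two.mp hF
  have hmemF : ∀ x : Γ, x ∈ F ↔ x = a ∨ x = b := by
    intro x; rw [hFab]; simp
  by_contra hcon
  push_neg at hcon
  have key : ∀ C, M.IsBase C → (B \ C).ncard ≤ 2 → (∑ᶠ e ∈ C, ψ e) ∈ F := by
    intro C hC hle
    by_contra hnot
    exact absurd (hcon C hC hnot) (not_lt.mpr hle)
  have hBfin : B.Finite := M.set_finite B hB.subset_ground
  have main : ∀ n : ℕ, ∀ C, M.IsBase C → (B \ C).ncard ≤ n + 2 → (∑ᶠ e ∈ C, ψ e) ∈ F := by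
    intro n
    induction n with
    | zero => exact fun C hC h => key C hC h
    | succ n ih =>
      intro C hC hle
      by_cases hle' : (B \ C).ncard ≤ n + 2
      · exact ih C hC hle'
      have heq : (B \ C).ncard = n + 3 := by omega
      have hCfin : C.Finite := M.set_finite C hC.subset_ground
      have hBCfin : (B \ C).Finite := hBfin.subset diff_subset
      -- ### step 1
      have hne0 : (B \ C).Nonempty := by
        rw [← Set.ncard_pos hBCfin]; omega
      obtain ⟨e0, he0⟩ := hne0
      obtain ⟨g0, hg0, hC1⟩ := StmtAux.step_exchange hC hB he0
      have hd1 : B \ (insert e0 (C \ {g0})) = (B \ C) \ {e0} := StmtAux2.set_step1 he0.1 hg0.2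
      have hd1' : (insert e0 (C \ {g0})) \ B = (C \ B) \ {g0} := StmtAux2.set_step2 he0.1
      have hcard1 : (B \ (insert e0 (C \ {g0}))).ncard = n + 2 := by
        rw [hd1, Set.ncard_diff_singleton_of_mem he0, heq]
        omega
      have hBC1fin : (B \ (insert e0 (C \ {g0}))).Finite := hBfin.subset diff_subset
      -- ### step 2
      have hne1 : (B \ (insert e0 (C \ {g0}))).Nonempty := by
        rw [← Set.ncard_pos hBC1fin]; omega
      obtain ⟨e1, he1⟩ := hne1
      obtain ⟨g1, hg1, hC2⟩ := StmtAux.step_exchange hC1 hB he1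
      have he1' : e1 ∈ (B \ C) \ {e0} := hd1 ▸ he1
      have hg1' : g1 ∈ (C \ B) \ {g0} := hd1' ▸ hg1
      have hd2 : B \ (insert e1 ((insert e0 (C \ {g0})) \ {g1}))
          = (B \ (insert e0 (C \ {g0}))) \ {e1} := StmtAux2.set_step1 he1.1 hg1.2
      have hd2' : (insert e1 ((insert e0 (C \ {g0})) \ {g1})) \ B
          = ((insert e0 (C \ {g0})) \ B) \ {g1} := StmtAux2.set_step2 he1.1
      have hcard2 : (B \ (insert e1 ((insert e0 (C \ {g0})) \ {g1}))).ncard = n + 1 := by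
        rw [hd2, Set.ncard_diff_singleton_of_mem he1, hcard1]
        omega
      have hBC2fin : (B \ (insert e1 ((insert e0 (C \ {g0})) \ {g1}))).Finite :=
        hBfin.subset diff_subset
      -- ### step 3
      have hne2 : (B \ (insert e1 ((insert e0 (C \ {g0})) \ {g1}))).Nonempty := by
        rw [← Set.ncard_pos hBC2fin]; omega
      obtain ⟨e2, he2⟩ := hne2
      obtain ⟨g2, hg2, hD⟩ := StmtAux.step_exchange hC2 hB he2
      have he2' : e2 ∈ ((B \ C) \ {e0}) \ {e1} := (hd1 ▸ hd2) ▸ he2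
      have hg2' : g2 ∈ ((C \ B) \ {g0}) \ {g1} := (hd1' ▸ hd2') ▸ hg2
      set D : Set α :=
        insert e2 ((insert e1 ((insert e0 (C \ {g0})) \ {g1})) \ {g2}) with hDdef
      have hd3 : B \ D = (B \ (insert e1 ((insert e0 (C \ {g0})) \ {g1}))) \ {e2} :=
        StmtAux2.set_step1 he2.1 hg2.2
      have hcard3 : (B \ D).ncard = n := by
        rw [hd3, Set.ncard_diff_singleton_of_mem he2, hcard2]
        omega
      have hDfin : D.Finite := M.set_finite D hD.subset_ground
      -- ### memberships and distinctness
      have he0C : e0 ∉ C := he0.2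
      have he1C : e1 ∉ C := he1'.1.2
      have he2C : e2 ∉ C := he2'.1.1.2
      have hg0C : g0 ∈ C := hg0.1
      have hg1C : g1 ∈ C := hg1'.1.1
      have hg2C : g2 ∈ C := hg2'.1.1.1
      have hg10 : g1 ≠ g0 := fun h => hg1'.2 h
      have hg20 : g2 ≠ g0 := fun h => hg2'.1.2 h
      have hg21 : g2 ≠ g1 := fun h => hg2'.2 h
      have he10 : e1 ≠ e0 := fun h => he1'.2 h
      have he20 : e2 ≠ e0 := fun h => he2'.1.2 h
      have he21 : e2 ≠ e1 := fun h => he2'.2 h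
      -- ### C-relative sets
      have hCC1 : C \ (insert e0 (C \ {g0})) = insert g0 (C \ C) :=
        StmtAux2.set_stepC he0C hg0C
      have hC1C : (insert e0 (C \ {g0})) \ C = insert e0 (C \ C) :=
        StmtAux2.set_stepX he0C hg0C
      have hCC2 : C \ (insert e1 ((insert e0 (C \ {g0})) \ {g1}))
          = insert g1 (insert g0 (C \ C)) := by
        rw [StmtAux2.set_stepC he1C hg1C, hCC1]
      have hC2C : (insert e1 ((insert e0 (C \ {g0})) \ {g1})) \ C
          = insert e1 (insert e0 (C \ C)) := by
        rw [StmtAux2.set_stepX he1C hg1C, hC1C]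
      have hCD : C \ D = insert g2 (insert g1 (insert g0 (C \ C))) := by
        rw [hDdef, StmtAux2.set_stepC he2C hg2C, hCC2]
      have hDC : D \ C = insert e2 (insert e1 (insert e0 (C \ C))) := by
        rw [hDdef, StmtAux2.set_stepX he2C hg2C, hC2C]
      have hCminusC : C \ C = (∅ : Set α) := diff_self
      rw [hCminusC] at hCD hDC
      -- ### p = sum over D is in F
      have hpF : (∑ᶠ e ∈ D, ψ e) ∈ F := ih D hD (by omega)
      -- ### labelings by Fin 3
      let x : Fin 3 → α := ![e0, e1, e2]
      let y : Fin 3 → α := ![g0, g1, g2]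
      have hx0 : x 0 = e0 := rfl
      have hx1 : x 1 = e1 := rfl
      have hx2 : x 2 = e2 := rfl
      have hy0 : y 0 = g0 := rfl
      have hy1 : y 1 = g1 := rfl
      have hy2 : y 2 = g2 := rfl
      have he0D : e0 ∈ D \ C := by rw [hDC]; simp
      have he1D : e1 ∈ D \ C := by rw [hDC]; simp
      have he2D : e2 ∈ D \ C := by rw [hDC]; simp
      have hg0D : g0 ∈ C \ D := by rw [hCD]; simp
      have hg1D : g1 ∈ C \ D := by rw [hCD]; simp
      have hg2D : g2 ∈ C \ D := by rw [hCD]; simp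
      have hxmem : ∀ i, x i ∈ D \ C := by
        intro i
        fin_cases i
        · exact he0D
        · exact he1D
        · exact he2D
      have hymem : ∀ j, y j ∈ C \ D := by
        intro j
        fin_cases j
        · exact hg0D
        · exact hg1D
        · exact hg2D
      have hxsurj : ∀ z ∈ D \ C, ∃ i, z = x i := by
        intro z hz
        rw [hDC] at hz
        rcases hz with h | h | h | h
        · exact ⟨2, h⟩
        · exact ⟨1, h⟩
        · exact ⟨0, h⟩
        · exact absurd h (notMem_empty z)
      have hysurj : ∀ z ∈ C \ D, ∃ j, z = y j := by
        intro z hz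
        rw [hCD] at hz
        rcases hz with h | h | h | h
        · exact ⟨2, h⟩
        · exact ⟨1, h⟩
        · exact ⟨0, h⟩
        · exact absurd h (notMem_empty z)
      have hyne : ∀ k k' : Fin 3, k ≠ k' → y k ≠ y k' := by
        intro k k' hkk'
        fin_cases k <;> fin_cases k'
        · exact absurd rfl hkk'
        · exact hg10.symm
        · exact hg20.symm
        · exact hg10
        · exact absurd rfl hkk'
        · exact hg21.symm
        · exact hg20
        · exact hg21
        · exact absurd rfl hkk'
      -- ### the two relations
      have hyC : ∀ j, y j ∈ C := fun j => (hymem j).1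
      have hxE : ∀ i, x i ∈ M.E := fun i => hD.subset_ground (hxmem i).1
      have hxC : ∀ i, x i ∉ C := fun i => (hxmem i).2
      have hC2' : ∀ i, ∃ j, M.IsBase (insert (x i) (C \ {y j})) ∧
          M.IsBase (insert (y j) (D \ {x i})) := by
        intro i
        obtain ⟨w, hwCD, hb1, hb2⟩ := StmtAux.sym_exchange hC hD (hxmem i)
        obtain ⟨j, rfl⟩ := hysurj w hwCD
        exact ⟨j, hb1, hb2⟩
      have hC3' : ∀ j, ∃ i, M.IsBase (insert (x i) (C \ {y j})) ∧
          M.IsBase (insert (y j) (D \ {x i})) := by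
        intro j
        obtain ⟨w, hwDC, hb1, hb2⟩ := StmtAux.sym_exchange hD hC (hymem j)
        obtain ⟨i, rfl⟩ := hxsurj w hwDC
        exact ⟨i, hb2, hb1⟩
      have hH' : ∀ i i' j, i ≠ i' →
          (∀ k, k ≠ j → ¬ M.IsBase (insert (x i) (C \ {y k}))) →
          (∀ k, k ≠ j → ¬ M.IsBase (insert (x i') (C \ {y k}))) → False := by
        intro i i' j hii' hrow hrow'
        obtain ⟨k1, k2, hk12, hk1j, hk2j⟩ := fin3_pair j
        have hcl : ∀ (i0 : Fin 3), (∀ k, k ≠ j → ¬ M.IsBase (insert (x i0) (C \ {y k}))) →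
            ∀ k, k ≠ j → x i0 ∈ M.closure (C \ {y k}) := by
          intro i0 hr k hk
          by_contra hclx
          exact hr k hk ((StmtAux.base_exch_iff hC (hyC k) (hxE i0) (hxC i0)).mpr hclx)
        obtain ⟨i'', hi''1, hi''2, hcov⟩ := fin3_third i i' hii'
        have hZindep : M.Indep (D \ {x i''}) := hD.indep.subset diff_subset
        have hZsub : ∀ k, k ≠ j → (D \ {x i''}) ⊆ M.closure (C \ {y k}) := by
          intro k hk z hz
          by_cases hzC : z ∈ C
          · refine M.subset_closure (C \ {y k}) (diff_subset.trans hC.subset_ground) ⟨hzC, ?_⟩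
            intro h
            exact (hymem k).2 (h ▸ hz.1)
          · obtain ⟨i0, rfl⟩ := hxsurj z ⟨hz.1, hzC⟩
            rcases hcov i0 with rfl | rfl | rfl
            · exact hcl i0 hrow k hk
            · exact hcl i0 hrow' k hk
            · exact absurd rfl hz.2
        have hcardZ : ∀ k : Fin 3, (C \ {y k}).encard ≤ (D \ {x i''}).encard := by
          intro k
          rw [Set.encard_diff_singleton_of_mem (hyC k),
            Set.encard_diff_singleton_of_mem (hxmem i'').1,
            hC.encard_eq_encard_of_isBase hD]
        have hclZ : ∀ k, k ≠ j → M.closure (D \ {x i''}) = M.closure (C \ {y k}) := by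
          intro k hk
          exact StmtAux.closure_eq_of_indep_subset_closure hZindep
            (hC.indep.subset diff_subset) (hZsub k hk) (hcardZ k)
        have hyk2 : y k2 ∈ M.closure (C \ {y k1}) := by
          refine M.subset_closure (C \ {y k1}) (diff_subset.trans hC.subset_ground)
            ⟨hyC k2, ?_⟩
          intro h
          exact hyne k2 k1 (fun hkk => hk12 hkk.symm) h
        rw [← hclZ k1 hk1j, hclZ k2 hk2j] at hyk2
        exact hC.indep.notMem_closure_diff_of_mem (hyC k2) hyk2
      -- ### apply the combinatorial lemma
      obtain ⟨σ, hσinj, hσD, i, i', hii', hSi, hSi'⟩ := matrix_lemma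
        (fun i j => M.IsBase (insert (x i) (C \ {y j})))
        (fun i j => M.IsBase (insert (y j) (D \ {x i}))) hC2' hC3' hH'
      obtain ⟨i'', hi''1, hi''2, hcov⟩ := fin3_third i i' hii'
      have hσsurj : Function.Surjective σ := Finite.surjective_of_injective hσinj
      -- ### the relabeled y's
      have hYmem : ∀ k, y (σ k) ∈ C \ D := fun k => hymem (σ k)
      have hYne : ∀ k k' : Fin 3, k ≠ k' → y (σ k) ≠ y (σ k') := by
        intro k k' hkk'
        exact hyne _ _ (fun h => hkk' (hσinj h))
      have hCDY : C \ D = {y (σ i), y (σ i'), y (σ i'')} := by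
        apply subset_antisymm
        · intro z hz
          obtain ⟨j, rfl⟩ := hysurj z hz
          obtain ⟨k, rfl⟩ := hσsurj j
          rcases hcov k with rfl | rfl | rfl
          · exact Or.inl rfl
          · exact Or.inr (Or.inl rfl)
          · exact Or.inr (Or.inr rfl)
        · intro z hz
          rcases hz with rfl | rfl | rfl
          · exact hYmem i
          · exact hYmem i'
          · exact hYmem i''
      have hDCX : D \ C = {x i, x i', x i''} := by
        apply subset_antisymm
        · intro z hz
          obtain ⟨i0, rfl⟩ := hxsurj z hz
          rcases hcov i0 with rfl | rfl | rfl
          · exact Or.inl rfl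
          · exact Or.inr (Or.inl rfl)
          · exact Or.inr (Or.inr rfl)
        · intro z hz
          rcases hz with rfl | rfl | rfl
          · exact hxmem i
          · exact hxmem i'
          · exact hxmem i''
      have hxne : ∀ k k' : Fin 3, k ≠ k' → x k ≠ x k' := by
        intro k k' hkk'
        fin_cases k <;> fin_cases k'
        · exact absurd rfl hkk'
        · exact he10.symm
        · exact he20.symm
        · exact he10
        · exact absurd rfl hkk'
        · exact he21.symm
        · exact he20
        · exact he21
        · exact absurd rfl hkk'
      -- ### distances and sums for the five cube bases
      have hBDfin : (B \ D).Finite := hBfin.subset diff_subset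
      have hpair_ncard : ∀ (s : Set α) (u v : α), s ⊆ {u, v} → s.ncard ≤ 2 := by
        intro s u v hs
        have h1 : s.ncard ≤ ({u, v} : Set α).ncard :=
          Set.ncard_le_ncard hs ((Set.finite_singleton v).insert u)
        have h2 : ({u, v} : Set α).ncard ≤ 2 := by
          have := Set.ncard_insert_le u ({v} : Set α)
          simpa using this
        omega
      -- singles
      have hsingle : ∀ k : Fin 3, M.IsBase (insert (y (σ k)) (D \ {x k})) →
          (∑ᶠ e ∈ insert (y (σ k)) (D \ {x k}), ψ e) ∈ F := by
        intro k hbase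
        apply ih _ hbase
        have hsub : B \ insert (y (σ k)) (D \ {x k}) ⊆ (B \ D) ∪ {x k} := by
          intro z hz
          by_cases hzD : z ∈ D
          · right
            by_contra hzx
            exact hz.2 (Or.inr ⟨hzD, hzx⟩)
          · exact Or.inl ⟨hz.1, hzD⟩
        have h1 : (B \ insert (y (σ k)) (D \ {x k})).ncard
            ≤ ((B \ D) ∪ {x k}).ncard :=
          Set.ncard_le_ncard hsub (hBDfin.union (Set.finite_singleton _))
        have h2 := Set.ncard_union_le (B \ D) ({x k} : Set α)
        have h3 : ({x k} : Set α).ncard = 1 := Set.ncard_singleton _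
        omega
      -- doubles
      have hdouble : ∀ k ka kb : Fin 3, k ≠ ka → k ≠ kb →
          (∀ w : Fin 3, w = k ∨ w = ka ∨ w = kb) →
          (∑ᶠ e ∈ insert (x k) (C \ {y (σ k)}), ψ e) ∈ F := by
        intro k ka kb hka hkb hkcov
        apply ih _ (hσD k)
        have hsub : B \ insert (x k) (C \ {y (σ k)}) ⊆ (B \ D) ∪ {x ka, x kb} := by
          intro z hz
          by_cases hzD : z ∈ D
          · by_cases hzC : z ∈ C
            · exfalso
              refine hz.2 (Or.inr ⟨hzC, ?_⟩)
              intro h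
              exact (hYmem k).2 (h ▸ hzD)
            · obtain ⟨i0, rfl⟩ := hxsurj z ⟨hzD, hzC⟩
              have hik : i0 ≠ k := by
                rintro rfl
                exact hz.2 (Or.inl rfl)
              right
              rcases hkcov i0 with rfl | rfl | rfl
              · exact absurd rfl hik
              · exact Or.inl rfl
              · exact Or.inr rfl
          · exact Or.inl ⟨hz.1, hzD⟩
        have h1 : (B \ insert (x k) (C \ {y (σ k)})).ncard
            ≤ ((B \ D) ∪ {x ka, x kb}).ncard :=
          Set.ncard_le_ncard hsub
            (hBDfin.union (((Set.finite_singleton _).insert _)))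
        have h2 := Set.ncard_union_le (B \ D) ({x ka, x kb} : Set α)
        have h3 : ({x ka, x kb} : Set α).ncard ≤ 2 := hpair_ncard _ _ _ subset_rfl
        omega
      -- ### sums
      have hsum_single : ∀ k : Fin 3,
          (∑ᶠ e ∈ insert (y (σ k)) (D \ {x k}), ψ e)
            = (∑ᶠ e ∈ D, ψ e) + ψ (y (σ k)) - ψ (x k) :=
        fun k => StmtAux2.sum_insert_diff ψ hDfin (hxmem k).1 (hYmem k).2
      have hsum_double : ∀ k : Fin 3,
          (∑ᶠ e ∈ insert (x k) (C \ {y (σ k)}), ψ e)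
            = (∑ᶠ e ∈ C, ψ e) + ψ (x k) - ψ (y (σ k)) :=
        fun k => StmtAux2.sum_insert_diff ψ hCfin (hYmem k).1 (hxC k)
      have hF2 : (∑ᶠ e ∈ D, ψ e) + (∑ᶠ e ∈ C \ D, ψ e)
          = (∑ᶠ e ∈ C, ψ e) + (∑ᶠ e ∈ D \ C, ψ e) :=
        StmtAux2.sum_diff_exchange ψ hCfin hDfin
      have hsumY : (∑ᶠ e ∈ C \ D, ψ e) = ψ (y (σ i)) + ψ (y (σ i')) + ψ (y (σ i'')) := by
        rw [hCDY]
        exact StmtAux2.sum_triple ψ (hYne i i' hii') (hYne i i'' (Ne.symm hi''1))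
          (hYne i' i'' (Ne.symm hi''2))
      have hsumX : (∑ᶠ e ∈ D \ C, ψ e) = ψ (x i) + ψ (x i') + ψ (x i'') := by
        rw [hDCX]
        exact StmtAux2.sum_triple ψ (hxne i i' hii') (hxne i i'' (Ne.symm hi''1))
          (hxne i' i'' (Ne.symm hi''2))
      -- ### final algebra
      set p := (∑ᶠ e ∈ D, ψ e) with hpdef
      set q := (∑ᶠ e ∈ C, ψ e) with hqdef
      set u := ψ (y (σ i)) - ψ (x i) with hudef
      set v := ψ (y (σ i')) - ψ (x i') with hvdef
      set w := ψ (y (σ i'')) - ψ (x i'') with hwdef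
      have hqp : q = p + u + v + w := by
        have h := hF2
        rw [hsumY, hsumX] at h
        rw [hudef, hvdef, hwdef]
        have : q = p + (ψ (y (σ i)) + ψ (y (σ i')) + ψ (y (σ i'')))
            - (ψ (x i) + ψ (x i') + ψ (x i'')) := by
          rw [eq_sub_iff_add_eq]; exact h.symm
        rw [this]; abel
      have hpmem : p = a ∨ p = b := (hmemF p).mp hpF
      have humem : p + u = a ∨ p + u = b := by
        have h := hsingle i hSi
        rw [hsum_single i] at h
        have heqv : p + u = (∑ᶠ e ∈ D, ψ e) + ψ (y (σ i)) - ψ (x i) := by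
          rw [hudef, hpdef]; abel
        rw [← heqv] at h
        exact (hmemF _).mp h
      have hvmem : p + v = a ∨ p + v = b := by
        have h := hsingle i' hSi'
        rw [hsum_single i'] at h
        have heqv : p + v = (∑ᶠ e ∈ D, ψ e) + ψ (y (σ i')) - ψ (x i') := by
          rw [hvdef, hpdef]; abel
        rw [← heqv] at h
        exact (hmemF _).mp h
      have hdmem : ∀ k ka kb : Fin 3, k ≠ ka → k ≠ kb →
          (∀ w0 : Fin 3, w0 = k ∨ w0 = ka ∨ w0 = kb) →
          (q - (ψ (y (σ k)) - ψ (x k)) = a ∨ q - (ψ (y (σ k)) - ψ (x k)) = b) := by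
        intro k ka kb h1 h2 h3
        have h := hdouble k ka kb h1 h2 h3
        rw [hsum_double k] at h
        have heqv : q - (ψ (y (σ k)) - ψ (x k))
            = (∑ᶠ e ∈ C, ψ e) + ψ (x k) - ψ (y (σ k)) := by
          rw [hqdef]; abel
        rw [← heqv] at h
        exact (hmemF _).mp h
      have huvmem : p + u + v = a ∨ p + u + v = b := by
        have h := hdmem i'' i i' (Ne.symm hi''1).symm (Ne.symm hi''2).symm
          (by intro w0; rcases hcov w0 with h | h | h; exacts [Or.inr (Or.inl h),
            Or.inr (Or.inr h), Or.inl h])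
        have heqv : p + u + v = q - (ψ (y (σ i'')) - ψ (x i'')) := by
          rw [hqp, hwdef]; abel
        rw [heqv]
        exact h
      have huwmem : p + u + w = a ∨ p + u + w = b := by
        have h := hdmem i' i i'' hii'.symm hi''2.symm
          (by intro w0; rcases hcov w0 with h | h | h; exacts [Or.inr (Or.inl h),
            Or.inl h, Or.inr (Or.inr h)])
        have heqv : p + u + w = q - (ψ (y (σ i')) - ψ (x i')) := by
          rw [hqp, hvdef]; abel
        rw [heqv]
        exact h
      have hvwmem : p + v + w = a ∨ p + v + w = b := by
        have h := hdmem i i' i'' hii' hi''1.symm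
          (by intro w0; rcases hcov w0 with h | h | h; exacts [Or.inl h,
            Or.inr (Or.inl h), Or.inr (Or.inr h)])
        have heqv : p + v + w = q - (ψ (y (σ i)) - ψ (x i)) := by
          rw [hqp, hudef]; abel
        rw [heqv]
        exact h
      have hfinal := alg_lemma hab humem hvmem huvmem huwmem hvwmem hpmem
      rw [hmemF, hqp]
      exact hfinal

  obtain ⟨B', hB', hB'F⟩ := hex
  exact hB'F (main (B \ B').ncard B' hB' (by omega))
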